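/- Let G and H be finite groups, m a positive integer, and suppose (A₁, ⟨y₁⟩) ∈ D_G^m and (A₂, ⟨y₂⟩) ∈ D_H^m. Let φ₁ ∈ Aut(A₁) be a ↦ y₁ a y₁⁻¹ and φ₂ ∈ Aut(A₂) be a ↦ y₂ a y₂⁻¹. Suppose k is a positive integer coprime with m and χ : A₁ → A₂ is a group isomorphism such that φ₁ = χ⁻¹ ∘ φ₂^k ∘ χ. Then the map μ : G → H defined by μ(x·y₁^j) = χ(x)·y₂^{k·j} for all x ∈ A₁ and 0 ≤ j < m is a well-defined group isomorphism from G onto H. -/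

import Mathlib

open Pointwise

/-- `(A, ⟨y⟩) ∈ D_G^m` : `A` is a normal abelian subgroup of `G` whose order is coprime
with `m`, `y` is an element of `G` of order `m`, and `G = A·⟨y⟩`. -/
structure IsDecompPair {G : Type*} [Group G] (m : ℕ) (A : Subgroup G) (y : G) : Prop where
  normal : A.Normal
  comm : ∀ a ∈ A, ∀ b ∈ A, a * b = b * a
  coprime : (Nat.card A).Coprime m
  orderEq : orderOf y = m
  prod_eq : (A : Set G) * (Subgroup.zpowers y : Set G) = Set.univ

/-- An element in both `A` (of order coprime with `m`) and `⟨y⟩` (with `y` of order `m`)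
is trivial. -/
lemma aux_triv {K : Type*} [Group K] [Finite K] {m : ℕ} (A : Subgroup K) (y : K)
    (hcop : (Nat.card A).Coprime m) (hord : orderOf y = m)
    {g : K} (hgA : g ∈ A) (hgz : g ∈ Subgroup.zpowers y) : g = 1 := by
  have h1 : orderOf g ∣ Nat.card A := by
    have := orderOf_dvd_natCard (⟨g, hgA⟩ : A)
    rwa [Subgroup.orderOf_mk] at this
  have h2 : orderOf g ∣ m := hord ▸ orderOf_dvd_of_mem_zpowers hgz
  have : orderOf g ∣ 1 := hcop ▸ Nat.dvd_gcd h1 h2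
  exact orderOf_eq_one_iff.mp (Nat.dvd_one.mp this)

/-- Existence of the decomposition `g = x * y ^ j` with `j < m`. -/
lemma aux_exdec {K : Type*} [Group K] [Finite K] {m : ℕ} (hm : 0 < m)
    (A : Subgroup K) (y : K) (h : IsDecompPair m A y) (g : K) :
    ∃ (x : A) (j : ℕ), j < m ∧ g = (x : K) * y ^ j := by
  have hg : g ∈ (A : Set K) * (Subgroup.zpowers y : Set K) := by
    rw [h.prod_eq]; trivial
  obtain ⟨a, ha, b, hb, rfl⟩ := hg
  have hb' : b ∈ Submonoid.powers y := mem_powers_iff_mem_zpowers.mpr hb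
  obtain ⟨n, rfl⟩ := hb'
  refine ⟨⟨a, ha⟩, n % m, Nat.mod_lt _ hm, ?_⟩
  have : y ^ (n % orderOf y) = y ^ n := pow_mod_orderOf y n
  rw [h.orderEq] at this
  rw [this]

/-- Partial uniqueness of the decomposition (no bounds on exponents). -/
lemma aux_eq {K : Type*} [Group K] [Finite K] {m : ℕ}
    (A : Subgroup K) (y : K) (hcop : (Nat.card A).Coprime m) (hord : orderOf y = m)
    (x x' : A) (i j : ℕ)
    (heq : (x : K) * y ^ i = (x' : K) * y ^ j) : x = x' ∧ y ^ i = y ^ j := by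
  have key : ((x'⁻¹ * x : A) : K) = y ^ ((j : ℤ) - (i : ℤ)) := by
    push_cast
    rw [zpow_sub, zpow_natCast, zpow_natCast]
    rw [inv_mul_eq_iff_eq_mul, ← mul_assoc, ← heq, mul_assoc, mul_inv_cancel, mul_one]
  have hmem : ((x'⁻¹ * x : A) : K) ∈ Subgroup.zpowers y := key ▸ zpow_mem (Subgroup.mem_zpowers y) _
  have h1 : ((x'⁻¹ * x : A) : K) = 1 := aux_triv A y hcop hord (x'⁻¹ * x).2 hmem
  have hxx : x = x' := by
    have : (x'⁻¹ * x : A) = 1 := Subtype.ext h1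
    rwa [inv_mul_eq_one, eq_comm] at this
  refine ⟨hxx, ?_⟩
  rw [h1] at key
  have : y ^ ((j : ℤ) - (i : ℤ)) = 1 := key.symm
  rw [zpow_sub, zpow_natCast, zpow_natCast] at this
  have := mul_eq_one_iff_eq_inv.mp this
  rw [inv_inv] at this
  exact this.symm

/-- Uniqueness of the decomposition. -/
lemma aux_uniq {K : Type*} [Group K] [Finite K] {m : ℕ}
    (A : Subgroup K) (y : K) (hcop : (Nat.card A).Coprime m) (hord : orderOf y = m)
    (x x' : A) (i j : ℕ) (hi : i < m) (hj : j < m)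
    (heq : (x : K) * y ^ i = (x' : K) * y ^ j) : x = x' ∧ i = j := by
  obtain ⟨hxx, hy⟩ := aux_eq A y hcop hord x x' i j heq
  refine ⟨hxx, ?_⟩
  have hmod : i ≡ j [MOD m] := by
    have := pow_eq_pow_iff_modEq.mp hy
    rwa [hord] at this
  unfold Nat.ModEq at hmod
  rwa [Nat.mod_eq_of_lt hi, Nat.mod_eq_of_lt hj] at hmod

theorem stmt12 {G H : Type*} [Group G] [Finite G] [Group H] [Finite H]
    (m : ℕ) (hm : 0 < m)
    (A₁ : Subgroup G) (y₁ : G) (A₂ : Subgroup H) (y₂ : H)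
    (h₁ : IsDecompPair m A₁ y₁) (h₂ : IsDecompPair m A₂ y₂)
    (k : ℕ) (hk : 0 < k) (hkm : Nat.Coprime k m)
    (χ : ↥A₁ ≃* ↥A₂)
    (hχ : ∀ a : ↥A₁,
      (χ ⟨y₁ * (a : G) * y₁⁻¹, h₁.normal.conj_mem (a : G) a.2 y₁⟩ : H) =
        y₂ ^ k * (χ a : H) * (y₂ ^ k)⁻¹) :
    ∃ μ : G ≃* H, ∀ (x : ↥A₁) (j : ℕ), j < m →
      μ ((x : G) * y₁ ^ j) = (χ x : H) * y₂ ^ (k * j) := by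
  classical
  haveI : NeZero m := ⟨hm.ne'⟩
  -- conjugation by powers of y₁
  have conj_mem : ∀ (n : ℕ) (a : ↥A₁), y₁ ^ n * (a : G) * (y₁ ^ n)⁻¹ ∈ A₁ :=
    fun n a => h₁.normal.conj_mem (a : G) a.2 (y₁ ^ n)
  have conj_chi : ∀ (n : ℕ) (a : ↥A₁),
      (χ ⟨y₁ ^ n * (a : G) * (y₁ ^ n)⁻¹, conj_mem n a⟩ : H) =
        y₂ ^ (k * n) * (χ a : H) * (y₂ ^ (k * n))⁻¹ := by
    intro n
    induction n with
    | zero => intro a; simp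
    | succ n ih =>
      intro a
      set c : ↥A₁ := ⟨y₁ ^ n * (a : G) * (y₁ ^ n)⁻¹, conj_mem n a⟩ with hc
      have hval : y₁ ^ (n + 1) * (a : G) * (y₁ ^ (n + 1))⁻¹ = y₁ * (c : G) * y₁⁻¹ := by
        simp only [hc]
        group
      have hsub : (⟨y₁ ^ (n + 1) * (a : G) * (y₁ ^ (n + 1))⁻¹, conj_mem (n + 1) a⟩ : ↥A₁) =
          ⟨y₁ * (c : G) * y₁⁻¹, h₁.normal.conj_mem (c : G) c.2 y₁⟩ := Subtype.ext hval
      rw [hsub, hχ c, ih a]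
      rw [show k * (n + 1) = k * n + k by ring, pow_add]
      group
  -- decomposition function for G
  choose xg jg hjg hdec using aux_exdec hm A₁ y₁ h₁
  set f : G → H := fun g => (χ (xg g) : H) * y₂ ^ (k * jg g) with hf
  -- the key specification
  have P : ∀ (x : ↥A₁) (j : ℕ), j < m → f ((x : G) * y₁ ^ j) = (χ x : H) * y₂ ^ (k * j) := by
    intro x j hj
    set g := (x : G) * y₁ ^ j with hg
    obtain ⟨hx, hjeq⟩ := aux_uniq A₁ y₁ h₁.coprime h₁.orderEq (xg g) x (jg g) j
      (hjg g) hj ((hdec g).symm.trans hg)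
    rw [hf]
    simp only [hx, hjeq]
  -- multiplicativity
  have fmul : ∀ g g' : G, f (g * g') = f g * f g' := by
    intro g g'
    set x := xg g with hx
    set i := jg g with hi
    set x' := xg g' with hx'
    set j := jg g' with hj
    set c : ↥A₁ := ⟨y₁ ^ i * (x' : G) * (y₁ ^ i)⁻¹, conj_mem i x'⟩ with hc
    have hgg' : g * g' = ((x * c : ↥A₁) : G) * y₁ ^ ((i + j) % m) := by
      have hy : y₁ ^ ((i + j) % m) = y₁ ^ (i + j) := by
        have := pow_mod_orderOf y₁ (i + j)
        rwa [h₁.orderEq] at this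
      rw [hy]
      rw [hdec g, hdec g']
      push_cast
      rw [pow_add]
      simp only [hc, hx, hi, hx', hj, Subgroup.coe_mk]
      group
    have hmod : y₂ ^ (k * ((i + j) % m)) = y₂ ^ (k * (i + j)) := by
      rw [pow_eq_pow_iff_modEq, h₂.orderEq]
      exact Nat.ModEq.mul_left k (Nat.mod_modEq _ m)
    rw [hgg', P (x * c) _ (Nat.mod_lt _ hm), hmod]
    have hchi : (χ (x * c) : H) = (χ x : H) * ((y₂ ^ (k * i)) * (χ x' : H) * (y₂ ^ (k * i))⁻¹) := by
      rw [map_mul]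
      push_cast
      rw [conj_chi i x']
    rw [hchi, hf]
    simp only
    rw [show k * (i + j) = k * i + k * j by ring, pow_add]
    group
    rfl
  -- injectivity
  have finj : Function.Injective f := by
    intro g g' hfeq
    rw [hf] at hfeq
    simp only at hfeq
    obtain ⟨hxeq, hyy⟩ := aux_eq A₂ y₂ h₂.coprime h₂.orderEq (χ (xg g)) (χ (xg g'))
      (k * jg g) (k * jg g') hfeq
    have hxx : xg g = xg g' := χ.injective hxeq
    have hij : jg g = jg g' := by
      have h2 : k * jg g ≡ k * jg g' [MOD m] := by
        have := pow_eq_pow_iff_modEq.mp hyy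
        rwa [h₂.orderEq] at this
      have h3 : jg g ≡ jg g' [MOD m] := Nat.ModEq.cancel_left_of_coprime hkm.symm h2
      unfold Nat.ModEq at h3
      rwa [Nat.mod_eq_of_lt (hjg g), Nat.mod_eq_of_lt (hjg g')] at h3
    rw [hdec g, hdec g', hxx, hij]
  -- surjectivity
  have fsurj : Function.Surjective f := by
    intro b
    obtain ⟨x₂, j, hjm, hb⟩ := aux_exdec hm A₂ y₂ h₂ b
    set u : (ZMod m)ˣ := ZMod.unitOfCoprime k hkm with hu
    set i : ℕ := (((u⁻¹ : (ZMod m)ˣ) : ZMod m) * (j : ZMod m)).val with hi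
    have him : i < m := ZMod.val_lt _
    have hki : y₂ ^ (k * i) = y₂ ^ j := by
      rw [pow_eq_pow_iff_modEq, h₂.orderEq]
      rw [← ZMod.natCast_eq_natCast_iff]
      push_cast
      rw [hi, ZMod.natCast_zmod_val]
      have hk' : (k : ZMod m) = (u : ZMod m) := (ZMod.coe_unitOfCoprime k hkm).symm
      rw [hk', ← mul_assoc, ← Units.val_mul, mul_inv_cancel, Units.val_one, one_mul]
    refine ⟨(χ.symm x₂ : G) * y₁ ^ i, ?_⟩
    rw [P (χ.symm x₂) i him, χ.apply_symm_apply, hki, ← hb]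
  -- assemble
  set fhom : G →* H := MonoidHom.mk' f fmul with hfhom
  refine ⟨MulEquiv.ofBijective fhom ⟨finj, fsurj⟩, ?_⟩
  intro x j hj
  exact P x j hj
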